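/- Any non-empty finite word w over a totally ordered finite alphabet can be uniquely expressed as a non-increasing concatenation w = ℓ₀ℓ₁⋯ℓₙ of Lyndon words, i.e., each ℓᵢ is a Lyndon word and ℓ₀ ≥ ℓ₁ ≥ ⋯ ≥ ℓₙ in the lexicographic order. -/

import Mathlib

/-- A finite word is a Lyndon word if it is nonempty and lexicographically
strictly smaller than all of its proper non-empty suffixes. -/
def IsLyndon {α : Type*} [LinearOrder α] (w : List α) : Prop :=
  w ≠ [] ∧ ∀ i, 0 < i → i < w.length → List.Lex (· < ·) w (w.drop i)

namespace CFLaux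

open List

set_option linter.unusedSectionVars false

variable {α : Type*} [LinearOrder α]

lemma join_cons' (x : List α) (L : List (List α)) : (x :: L).flatten = x ++ L.flatten := rfl

lemma join_nil' : ([] : List (List α)).flatten = [] := rfl

lemma lex_iff_lt {s t : List α} : List.Lex (· < ·) s t ↔ s < t := Iff.rfl

lemma prefix_not_lt {s t : List α} (h : s <+: t) : ¬ t < s := by
  obtain ⟨u, rfl⟩ := h
  induction s with
  | nil => exact List.not_lex_nil
  | cons a s ih =>
    intro hl
    rw [List.cons_append] at hl
    exact ih (List.lex_cons_iff.mp hl)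

lemma prefix_le {s t : List α} (h : s <+: t) : s ≤ t :=
  le_of_not_gt (prefix_not_lt h)

lemma append_left_lt_iff (u : List α) {s t : List α} : u ++ s < u ++ t ↔ s < t := by
  induction u with
  | nil => rfl
  | cons a u ih =>
    constructor
    · intro h
      exact ih.mp (List.lex_cons_iff.mp h)
    · intro h
      exact List.Lex.cons (ih.mpr h)

lemma lt_append_or_prefix : ∀ {s t : List α}, s < t →
    ∀ a b : List α, s <+: t ∨ s ++ a < t ++ b := by
  intro s t h
  induction h with
  | nil => exact fun a b => Or.inl (List.nil_prefix)
  | @rel _ _ _ _ h => exact fun a b => Or.inr (List.Lex.rel h)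
  | @cons c s' t' _ ih =>
    intro a b
    rcases ih a b with h1 | h2
    · exact Or.inl (List.cons_prefix_cons.mpr ⟨rfl, h1⟩)
    · exact Or.inr (List.Lex.cons h2)

lemma isLyndon_append {u v : List α} (hu : IsLyndon u) (hv : IsLyndon v)
    (huv : List.Lex (· < ·) u v) : IsLyndon (u ++ v) := by
  rw [lex_iff_lt] at huv
  have hune : u ≠ [] := hu.1
  have hvne : v ≠ [] := hv.1
  have hupos : 0 < u.length := List.length_pos_iff.mpr hune
  have hvpos : 0 < v.length := List.length_pos_iff.mpr hvne
  -- Key claim: u ++ v < v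
  have hC : u ++ v < v := by
    by_cases hpre : u <+: v
    · obtain ⟨v', rfl⟩ := hpre
      have hv'ne : v' ≠ [] := by
        rintro rfl
        rw [List.append_nil] at huv
        exact lt_irrefl _ huv
      have hlen : u.length < (u ++ v').length := by
        rw [List.length_append]
        have : 0 < v'.length := List.length_pos_iff.mpr hv'ne
        omega
      have h2 := hv.2 u.length hupos hlen
      rw [List.drop_left] at h2
      exact (append_left_lt_iff u).mpr h2
    · rcases lt_append_or_prefix huv v [] with h | h
      · exact absurd h hpre
      · rwa [List.append_nil] at h
  constructor
  · simp [hune]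
  · intro i hi0 hilen
    rw [List.length_append] at hilen
    rcases lt_trichotomy i u.length with hlt | heq | hgt
    · have hdrop : (u ++ v).drop i = u.drop i ++ v :=
        List.drop_append_of_le_length (le_of_lt hlt)
      rw [hdrop]
      have h1 : u < u.drop i := hu.2 i hi0 hlt
      rcases lt_append_or_prefix h1 v v with h2 | h2
      · have := h2.length_le
        rw [List.length_drop] at this
        omega
      · exact h2
    · subst heq
      rw [List.drop_left]
      exact hC
    · have hdrop : (u ++ v).drop i = v.drop (i - u.length) := by
        rw [List.drop_append]
        rw [List.drop_eq_nil_iff.mpr (le_of_lt hgt), List.nil_append]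
      rw [hdrop]
      have h1 : v < v.drop (i - u.length) := hv.2 (i - u.length) (by omega) (by omega)
      exact lt_trans hC h1

lemma not_chain'_split {β : Type*} {R : β → β → Prop} :
    ∀ {l : List β}, ¬ l.Chain' R → ∃ a x y b, l = a ++ x :: y :: b ∧ ¬ R x y := by
  intro l
  induction l with
  | nil => intro h; exact absurd List.isChain_nil h
  | cons x t ih =>
    intro h
    cases t with
    | nil => exact absurd (List.isChain_singleton x) h
    | cons y s =>
      simp only [List.Chain', List.isChain_cons_cons] at h
      push_neg at h
      by_cases hxy : R x y
      · obtain ⟨a, x', y', b, heq, hr⟩ := ih (h hxy)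
        exact ⟨x :: a, x', y', b, by rw [heq]; rfl, hr⟩
      · exact ⟨[], x, y, s, rfl, hxy⟩

lemma exists_fact : ∀ (n : ℕ) (L : List (List α)), L.length ≤ n →
    (∀ l ∈ L, IsLyndon l) →
    ∃ M : List (List α), M.flatten = L.flatten ∧ (∀ l ∈ M, IsLyndon l) ∧
      M.Chain' (fun x y => ¬ List.Lex (· < ·) x y) := by
  intro n
  induction n with
  | zero =>
    intro L hlen _
    rw [Nat.le_zero, List.length_eq_zero_iff] at hlen
    subst hlen
    exact ⟨[], rfl, by simp, List.isChain_nil⟩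
  | succ n ih =>
    intro L hlen hL
    by_cases hc : L.Chain' (fun x y => ¬ List.Lex (· < ·) x y)
    · exact ⟨L, rfl, hL, hc⟩
    · obtain ⟨a, x, y, b, rfl, hxy⟩ := not_chain'_split hc
      push_neg at hxy
      have hx : IsLyndon x := hL x (by simp)
      have hy : IsLyndon y := hL y (by simp)
      have hmerge : IsLyndon (x ++ y) := isLyndon_append hx hy hxy
      have hlen' : (a ++ (x ++ y) :: b).length ≤ n := by
        simp only [List.length_append, List.length_cons] at hlen ⊢
        omega
      have hL' : ∀ l ∈ a ++ (x ++ y) :: b, IsLyndon l := by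
        intro l hl
        simp only [List.mem_append, List.mem_cons] at hl
        rcases hl with h | h | h
        · exact hL l (by simp [h])
        · subst h; exact hmerge
        · exact hL l (by simp [h])
      obtain ⟨M, hM1, hM2, hM3⟩ := ih _ hlen' hL'
      refine ⟨M, ?_, hM2, hM3⟩
      rw [hM1]
      simp [List.flatten]

lemma no_long_suffix {x y : List α} (hy : IsLyndon y) (hxy : x <+: y) (hx : x ≠ []) :
    ∀ (L : List (List α)), (∀ ℓ ∈ L, ℓ ≠ [] ∧ ℓ ≤ x) →
    ∀ i, 0 < i → i < y.length → ¬ (y.drop i <+: L.flatten) := by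
  intro L
  induction L with
  | nil =>
    intro _ i _ hiy hpre
    have := List.prefix_nil.mp hpre
    rw [List.drop_eq_nil_iff] at this
    omega
  | cons ℓ T ih =>
    intro hLT i hi0 hiy hpre
    have hℓ := hLT ℓ (by simp)
    have hT : ∀ ℓ' ∈ T, ℓ' ≠ [] ∧ ℓ' ≤ x := fun ℓ' h => hLT ℓ' (by simp [h])
    set z := y.drop i with hz
    have hzne : z ≠ [] := by
      rw [hz, ne_eq, List.drop_eq_nil_iff]
      omega
    have hyz : y < z := hy.2 i hi0 hiy
    rw [join_cons'] at hpre
    by_cases hle : z.length ≤ ℓ.length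
    · have hzℓ : z <+: ℓ :=
        List.prefix_of_prefix_length_le hpre (ℓ.prefix_append T.flatten) hle
      have : y < y :=
        lt_of_lt_of_le hyz (le_trans (prefix_le hzℓ) (le_trans hℓ.2 (prefix_le hxy)))
      exact lt_irrefl _ this
    · push_neg at hle
      have hℓz : ℓ <+: z :=
        List.prefix_of_prefix_length_le (ℓ.prefix_append T.flatten) hpre (le_of_lt hle)
      have hzsplit : ℓ ++ z.drop ℓ.length = z := List.prefix_iff_eq_append.mp hℓz
      have hz' : z.drop ℓ.length <+: T.flatten := by
        obtain ⟨w, hw⟩ := hpre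
        rw [← hzsplit, List.append_assoc] at hw
        have := List.append_cancel_left hw
        exact ⟨w, this⟩
      have hdd : z.drop ℓ.length = y.drop (i + ℓ.length) := by
        rw [hz, List.drop_drop]
      have hℓpos : 0 < ℓ.length := List.length_pos_iff.mpr hℓ.1
      have hzlen : z.length = y.length - i := by rw [hz, List.length_drop]
      have hlt : i + ℓ.length < y.length := by omega
      exact ih hT (i + ℓ.length) (by omega) hlt (hdd ▸ hz')

lemma len_le {x y : List α} {L : List (List α)}
    (hx : IsLyndon x) (hL : ∀ l ∈ L, IsLyndon l)
    (hc : (x :: L).Chain' (fun a b => ¬ List.Lex (· < ·) a b))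
    (hy : IsLyndon y) (hpre : y <+: (x :: L).flatten) : y.length ≤ x.length := by
  by_contra hlen
  push_neg at hlen
  rw [join_cons'] at hpre
  have hxw : x <+: x ++ L.flatten := x.prefix_append _
  have hxy : x <+: y := List.prefix_of_prefix_length_le hxw hpre (le_of_lt hlen)
  have hyeq : x ++ y.drop x.length = y := List.prefix_iff_eq_append.mp hxy
  have hzpre : y.drop x.length <+: L.flatten := by
    rw [← hyeq] at hpre
    exact (List.prefix_append_right_inj x).mp hpre
  have hchain : ∀ ℓ ∈ L, ℓ ≠ [] ∧ ℓ ≤ x := by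
    have htrans : IsTrans (List α) (fun a b : List α => ¬ List.Lex (· < ·) a b) := by
      constructor
      intro a b c hab hbc
      rw [lex_iff_lt, not_lt] at hab hbc ⊢
      exact le_trans hbc hab
    have hp := List.isChain_iff_pairwise.mp hc
    rw [List.pairwise_cons] at hp
    intro ℓ hℓ
    refine ⟨(hL ℓ hℓ).1, ?_⟩
    have := hp.1 ℓ hℓ
    rw [lex_iff_lt, not_lt] at this
    exact this
  have hxpos : 0 < x.length := List.length_pos_iff.mpr hx.1
  exact no_long_suffix hy hxy hx.1 L hchain x.length hxpos hlen hzpre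

lemma unique_fact : ∀ (L M : List (List α)),
    (∀ l ∈ L, IsLyndon l) → L.Chain' (fun x y => ¬ List.Lex (· < ·) x y) →
    (∀ l ∈ M, IsLyndon l) → M.Chain' (fun x y => ¬ List.Lex (· < ·) x y) →
    L.flatten = M.flatten → L = M := by
  intro L
  induction L with
  | nil =>
    intro M _ _ hM _ hjoin
    cases M with
    | nil => rfl
    | cons y M' =>
      exfalso
      have : y = [] := by
        have h := hjoin.symm
        rw [join_cons'] at h
        exact (List.append_eq_nil_iff.mp h).1
      exact (hM y (by simp)).1 this
  | cons x L ih =>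
    intro M hL hcL hM hcM hjoin
    cases M with
    | nil =>
      exfalso
      have h := hjoin
      rw [join_cons'] at h
      exact (hL x (by simp)).1 (List.append_eq_nil_iff.mp h).1
    | cons y M' =>
      have hx : IsLyndon x := hL x (by simp)
      have hy : IsLyndon y := hM y (by simp)
      have hL' : ∀ l ∈ L, IsLyndon l := fun l h => hL l (by simp [h])
      have hM' : ∀ l ∈ M', IsLyndon l := fun l h => hM l (by simp [h])
      have h1 : y.length ≤ x.length := by
        apply len_le hx hL' hcL hy
        rw [hjoin, join_cons']
        exact y.prefix_append _
      have h2 : x.length ≤ y.length := by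
        apply len_le hy hM' hcM hx
        rw [← hjoin, join_cons']
        exact x.prefix_append _
      have hxy : x = y := by
        have hxp : x <+: (x :: L).flatten := by rw [join_cons']; exact x.prefix_append _
        have hyp : y <+: (x :: L).flatten := by
          rw [hjoin, join_cons']; exact y.prefix_append _
        exact ((List.prefix_of_prefix_length_le hyp hxp h1).eq_of_length (le_antisymm h1 h2)).symm
      subst hxy
      have hjoin' : L.flatten = M'.flatten := by
        rw [join_cons', join_cons'] at hjoin
        exact List.append_cancel_left hjoin
      rw [ih M' hL' hcL.tail hM' hcM.tail hjoin']

end CFLaux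

/-- Chen–Fox–Lyndon: any non-empty finite word over a totally ordered finite
alphabet is uniquely a non-increasing concatenation of Lyndon words. -/
theorem chen_fox_lyndon_factorization {α : Type*} [LinearOrder α] [Fintype α]
    (w : List α) (hw : w ≠ []) :
    ∃! L : List (List α),
      L.flatten = w ∧ (∀ l ∈ L, IsLyndon l) ∧
      L.Chain' (fun x y => ¬ List.Lex (· < ·) x y) := by
  have hsingle : ∀ l ∈ w.map (fun a => [a]), IsLyndon l := by
    intro l hl
    simp only [List.mem_map] at hl
    obtain ⟨a, _, rfl⟩ := hl
    exact ⟨by simp, fun i hi0 hi1 => by simp only [List.length_cons, List.length_nil] at hi1; omega⟩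
  obtain ⟨M, hM1, hM2, hM3⟩ :=
    CFLaux.exists_fact (w.map (fun a => [a])).length (w.map (fun a => [a])) le_rfl hsingle
  have hMjoin : M.flatten = w := by
    rw [hM1]
    show (List.map (fun a => [a]) w).flatten = w
    have h : ∀ t : List α, (List.map (fun a => [a]) t).flatten = t := by
      intro t
      induction t with
      | nil => rfl
      | cons a t ih => simpa using ih
    exact h w
  refine ⟨M, ⟨hMjoin, hM2, hM3⟩, ?_⟩
  rintro N ⟨hN1, hN2, hN3⟩
  exact CFLaux.unique_fact N M hN2 hN3 hM2 hM3 (by rw [hN1, hMjoin])
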